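/- arXiv:1303.7146 — 2 statements merged into one kernel-verified Lean document; each statement's English description precedes it below -/
import Mathlib

section
/- Let (X, δ) be a diversity with induced metric d, and let Y ⊆ X be nonempty and bounded with respect to d. Suppose r assigns to each finite subset of Y a real number, with r(∅) = 0, and satisfies δ(⋃_{A∈𝒜} A) ≤ Σ_{A∈𝒜} r(A) for every finite collection 𝒜 of finite subsets of Y. Then the extension of r to all finite subsets A of X defined by r(A) = r(A ∩ Y) + Σ_{a ∈ A \ Y} r_a(Y) satisfies δ(⋃_{A∈𝒜} A) ≤ Σ_{A∈𝒜} r(A) for every finite collection 𝒜 of finite subsets of X. -/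
/-- A diversity on `X`: a real-valued function on finite subsets of `X` which is
nonnegative, vanishes exactly on sets of cardinality at most one, and satisfies the
triangle inequality `δ(A ∪ C) ≤ δ(A ∪ B) + δ(B ∪ C)` for nonempty `B`. -/
structure Diversity (X : Type*) [DecidableEq X] where
  delta : Finset X → ℝ
  nonneg : ∀ A, 0 ≤ delta A
  eq_zero_iff : ∀ A, delta A = 0 ↔ A.card ≤ 1
  triangle : ∀ A B C : Finset X, B.Nonempty →
    delta (A ∪ C) ≤ delta (A ∪ B) + delta (B ∪ C)

namespace Diversity

variable {X : Type*} [DecidableEq X]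

/-- A diversity is hyperconvex if for every `r : ⟨X⟩ → ℝ` with `r ∅ = 0` such that
`δ(⋃_{A ∈ 𝒜} A) ≤ ∑_{A ∈ 𝒜} r A` for every finite collection `𝒜` of finite subsets
of `X`, there is `z ∈ X` with `δ({z} ∪ Y) ≤ r Y` for all finite `Y ⊆ X`. -/
def Hyperconvex (D : Diversity X) : Prop :=
  ∀ r : Finset X → ℝ, r ∅ = 0 →
    (∀ 𝒜 : Finset (Finset X), D.delta (𝒜.sup id) ≤ ∑ A ∈ 𝒜, r A) →
    ∃ z : X, ∀ Y : Finset X, D.delta (insert z Y) ≤ r Y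

/-- A diversity is bounded if its values are uniformly bounded above. -/
def Bounded (D : Diversity X) : Prop :=
  ∃ M : ℝ, 0 ≤ M ∧ ∀ A : Finset X, D.delta A ≤ M

end Diversity

open Classical in
/-- The Chebyshev radius of a set `Y ⊆ X` with respect to `x ∈ X`, for the metric
induced by a diversity: `r_x(Y) = sup_{y ∈ Y} d(x, y)`. -/
noncomputable def Diversity.chebRadius {X : Type*} [DecidableEq X]
    (D : Diversity X) (x : X) (Y : Set X) : ℝ :=
  sSup ((fun y => D.delta {x, y}) '' Y)

section Aux

variable {X : Type*} [DecidableEq X]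

private lemma aux_sum_image_le {ι κ : Type*} [DecidableEq ι] [DecidableEq κ]
    (s : Finset ι) (g : ι → κ) (f : κ → ℝ)
    (hf : ∀ a ∈ s, 0 ≤ f (g a)) : ∑ b ∈ s.image g, f b ≤ ∑ a ∈ s, f (g a) := by
  induction s using Finset.induction_on with
  | empty => simp
  | insert _ _ ha ih =>
    rename_i a s
    rw [Finset.image_insert, Finset.sum_insert ha]
    have hf' : ∀ a ∈ s, 0 ≤ f (g a) := fun a h => hf a (Finset.mem_insert_of_mem h)
    by_cases h : g a ∈ s.image g
    · rw [Finset.insert_eq_self.mpr h]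
      exact le_add_of_nonneg_of_le (hf a (Finset.mem_insert_self _ _)) (ih hf')
    · rw [Finset.sum_insert h]
      exact add_le_add le_rfl (ih hf')

private lemma aux_sum_biUnion_le {ι κ : Type*} [DecidableEq ι] [DecidableEq κ]
    (s : Finset ι) (t : ι → Finset κ)
    (f : κ → ℝ) (hf : ∀ x, 0 ≤ f x) :
    ∑ x ∈ s.biUnion t, f x ≤ ∑ i ∈ s, ∑ x ∈ t i, f x := by
  induction s using Finset.induction_on with
  | empty => simp
  | insert _ _ ha ih =>
    rename_i a s
    rw [Finset.biUnion_insert, Finset.sum_insert ha]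
    calc ∑ x ∈ t a ∪ s.biUnion t, f x
        ≤ ∑ x ∈ t a, f x + ∑ x ∈ s.biUnion t, f x := by
          have := Finset.sum_union_inter (s₁ := t a) (s₂ := s.biUnion t) (f := f)
          have h0 : 0 ≤ ∑ x ∈ t a ∩ s.biUnion t, f x := Finset.sum_nonneg fun x _ => hf x
          linarith
      _ ≤ _ := add_le_add le_rfl ih

private lemma Diversity.singleton_zero (D : Diversity X) (x : X) : D.delta {x} = 0 :=
  (D.eq_zero_iff _).mpr (by simp)

private lemma Diversity.le_insert (D : Diversity X) (A : Finset X) (b : X) :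
    D.delta A ≤ D.delta (insert b A) := by
  have h := D.triangle A {b} ∅ ⟨b, by simp⟩
  simp only [Finset.union_empty, D.singleton_zero, add_zero] at h
  rw [Finset.insert_eq, Finset.union_comm]; exact h

private lemma Diversity.replace (D : Diversity X) (y₀ : X) (T : Finset X) :
    ∀ S : Finset X, y₀ ∈ S →
      D.delta (S ∪ T) ≤ D.delta S + ∑ a ∈ T, D.delta {y₀, a} := by
  induction T using Finset.induction_on with
  | empty => intro S _; simp
  | insert _ _ ha ih =>
    rename_i a T
    intro S hy
    have key : D.delta (S ∪ insert a T) ≤ D.delta (S ∪ T) + D.delta {y₀, a} := by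
      have h := D.triangle (S ∪ T) {y₀} {a} ⟨y₀, by simp⟩
      have e1 : (S ∪ T) ∪ {a} = S ∪ insert a T := by
        ext x; simp [Finset.mem_insert, or_comm, or_assoc, or_left_comm]
      have e2 : (S ∪ T) ∪ {y₀} = S ∪ T := by
        apply Finset.union_eq_left.mpr
        simp [Finset.mem_union, hy]
      have e3 : ({y₀} : Finset X) ∪ {a} = {y₀, a} := rfl
      rw [e1, e2, e3] at h
      exact h
    rw [Finset.sum_insert ha]
    calc D.delta (S ∪ insert a T) ≤ D.delta (S ∪ T) + D.delta {y₀, a} := key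
      _ ≤ (D.delta S + ∑ a ∈ T, D.delta {y₀, a}) + D.delta {y₀, a} :=
          add_le_add (ih S hy) le_rfl
      _ = _ := by ring

end Aux

open Classical in
/-- Let `(X, δ)` be a diversity, `Y ⊆ X` nonempty and bounded for the
induced metric, and let `r` on finite subsets of `Y` satisfy `r ∅ = 0` and the
hyperconvexity inequality for all finite collections of finite subsets of `Y`. Then the
extension of `r` to all finite subsets of `X` given by
`r'(A) = r(A ∩ Y) + ∑_{a ∈ A \ Y} r_a(Y)` satisfies the hyperconvexity inequality for
all finite collections of finite subsets of `X`. -/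
theorem extension_satisfies_hyperconvexity_condition
    {X : Type*} [DecidableEq X] (D : Diversity X)
    (Y : Set X) (hYne : Y.Nonempty)
    (hYbd : ∃ M : ℝ, ∀ y ∈ Y, ∀ z ∈ Y, D.delta {y, z} ≤ M)
    (r : Finset X → ℝ) (hr0 : r ∅ = 0)
    (hr : ∀ 𝒜 : Finset (Finset X), (∀ A ∈ 𝒜, (A : Set X) ⊆ Y) →
      D.delta (𝒜.sup id) ≤ ∑ A ∈ 𝒜, r A)
    (r' : Finset X → ℝ)
    (hr' : ∀ A : Finset X,
      r' A = r (A.filter (fun a => a ∈ Y)) +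
        ∑ a ∈ A.filter (fun a => a ∉ Y), D.chebRadius a Y) :
    ∀ 𝒜 : Finset (Finset X), D.delta (𝒜.sup id) ≤ ∑ A ∈ 𝒜, r' A := by
  obtain ⟨y₁, hy₁⟩ := hYne
  obtain ⟨M, hM⟩ := hYbd
  -- pair distances to points of Y are bounded by Chebyshev radii
  have pair_le_cheb : ∀ a : X, ∀ y ∈ Y, D.delta {a, y} ≤ D.chebRadius a Y := by
    intro a y hy
    have hbdd : BddAbove ((fun y => D.delta {a, y}) '' Y) := by
      refine ⟨D.delta {a, y₁} + M, ?_⟩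
      rintro v ⟨z, hz, rfl⟩
      have h := D.triangle {a} {y₁} {z} ⟨y₁, by simp⟩
      have e1 : ({a} : Finset X) ∪ {z} = {a, z} := rfl
      have e2 : ({a} : Finset X) ∪ {y₁} = {a, y₁} := rfl
      have e3 : ({y₁} : Finset X) ∪ {z} = {y₁, z} := rfl
      rw [e1, e2, e3] at h
      have := hM y₁ hy₁ z hz
      simp only
      linarith
    exact le_csSup hbdd ⟨y, hy, rfl⟩
  have cheb_nonneg : ∀ a : X, 0 ≤ D.chebRadius a Y :=
    fun a => le_trans (D.nonneg {a, y₁}) (pair_le_cheb a y₁ hy₁)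
  -- r is nonnegative on subsets of Y
  have r_nonneg : ∀ B : Finset X, (B : Set X) ⊆ Y → 0 ≤ r B := by
    intro B hB
    have h := hr {B} (by simpa using hB)
    simpa using le_trans (D.nonneg _) h
  intro 𝒜
  set U := 𝒜.sup id with hU
  set S := U.filter (fun a => a ∈ Y) with hS
  set T := U.filter (fun a => a ∉ Y) with hT
  have hUST : S ∪ T = U := Finset.filter_union_filter_not_eq _ _
  -- bound δ(S) using hr applied to the filtered collection
  have hSbound : D.delta S ≤ ∑ A ∈ 𝒜, r (A.filter (fun a => a ∈ Y)) := by
    set 𝒜' := 𝒜.image (fun A => A.filter (fun a => a ∈ Y)) with h𝒜'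
    have hsup : 𝒜'.sup id = S := by
      rw [h𝒜', Finset.sup_image]
      ext x
      simp only [hS, hU, Finset.mem_sup, Finset.mem_filter, Function.comp, id]
      constructor
      · rintro ⟨A, hA, hx, hxY⟩; exact ⟨⟨A, hA, hx⟩, hxY⟩
      · rintro ⟨⟨A, hA, hx⟩, hxY⟩; exact ⟨A, hA, hx, hxY⟩
    have hsubs : ∀ B ∈ 𝒜', (B : Set X) ⊆ Y := by
      rintro B hB
      rw [h𝒜', Finset.mem_image] at hB
      obtain ⟨A, _, rfl⟩ := hB
      intro x hx
      simp only [Finset.coe_filter, Set.mem_setOf_eq] at hx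
      exact hx.2
    calc D.delta S = D.delta (𝒜'.sup id) := by rw [hsup]
      _ ≤ ∑ B ∈ 𝒜', r B := hr 𝒜' hsubs
      _ ≤ ∑ A ∈ 𝒜, r (A.filter (fun a => a ∈ Y)) := by
          apply aux_sum_image_le
          intro A _
          apply r_nonneg
          intro x hx
          simp only [Finset.coe_filter, Set.mem_setOf_eq] at hx
          exact hx.2
  -- bound the sum of pair distances over T by the double sum of Chebyshev radii
  have hTbiUnion : T = 𝒜.biUnion (fun A => A.filter (fun a => a ∉ Y)) := by
    ext x
    simp only [hT, hU, Finset.mem_filter, Finset.mem_sup, Finset.mem_biUnion, id]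
    tauto
  have hTsum : ∀ y₀ ∈ Y, ∑ a ∈ T, D.delta {y₀, a} ≤
      ∑ A ∈ 𝒜, ∑ a ∈ A.filter (fun a => a ∉ Y), D.chebRadius a Y := by
    intro y₀ hy₀
    calc ∑ a ∈ T, D.delta {y₀, a} ≤ ∑ a ∈ T, D.chebRadius a Y := by
          apply Finset.sum_le_sum
          intro a _
          rw [Finset.pair_comm]
          exact pair_le_cheb a y₀ hy₀
      _ ≤ _ := by
          rw [hTbiUnion]
          exact aux_sum_biUnion_le _ _ _ cheb_nonneg
  -- main estimate
  have key : D.delta U ≤ D.delta S +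
      ∑ A ∈ 𝒜, ∑ a ∈ A.filter (fun a => a ∉ Y), D.chebRadius a Y := by
    by_cases hSne : S.Nonempty
    · obtain ⟨y₀, hy₀S⟩ := hSne
      have hy₀Y : y₀ ∈ Y := (Finset.mem_filter.mp hy₀S).2
      calc D.delta U = D.delta (S ∪ T) := by rw [hUST]
        _ ≤ D.delta S + ∑ a ∈ T, D.delta {y₀, a} := D.replace y₀ T S hy₀S
        _ ≤ _ := add_le_add le_rfl (hTsum y₀ hy₀Y)
    · rw [Finset.not_nonempty_iff_eq_empty] at hSne
      have hUT : U = T := by rw [← hUST, hSne, Finset.empty_union]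
      have h1 : D.delta U ≤ ∑ a ∈ T, D.delta {y₁, a} := by
        calc D.delta U = D.delta T := by rw [hUT]
          _ ≤ D.delta (insert y₁ T) := D.le_insert T y₁
          _ = D.delta ({y₁} ∪ T) := by rw [Finset.insert_eq]
          _ ≤ D.delta {y₁} + ∑ a ∈ T, D.delta {y₁, a} := D.replace y₁ T {y₁} (by simp)
          _ = ∑ a ∈ T, D.delta {y₁, a} := by rw [D.singleton_zero]; ring
      have h2 := hTsum y₁ hy₁
      have h3 := D.nonneg S
      linarith
  have hsum : ∑ A ∈ 𝒜, r' A = ∑ A ∈ 𝒜, r (A.filter (fun a => a ∈ Y)) +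
      ∑ A ∈ 𝒜, ∑ a ∈ A.filter (fun a => a ∉ Y), D.chebRadius a Y := by
    rw [← Finset.sum_add_distrib]
    exact Finset.sum_congr rfl fun A _ => hr' A
  rw [hsum]
  linarith
end

section
/- Let (X, δ) be a hyperconvex diversity with induced metric d, and let Z ⊆ X be nonempty and bounded with respect to d. Let r assign to each finite subset of Z a real number, with r(∅) = 0, satisfying δ(⋃_{A∈𝒜} A) ≤ Σ_{A∈𝒜} r(A) for every finite collection 𝒜 of finite subsets of Z. Define Y = { x ∈ X : δ(A ∪ {x}) ≤ r(A) for every finite A ⊆ Z }. Then Y is nonempty and the restricted diversity (Y, δ) is a hyperconvex diversity. -/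
namespace Diversity

variable {X : Type*} [DecidableEq X]

/-- The restriction of a diversity to a subset `H ⊆ X`. -/
def restrict (D : Diversity X) (H : Set X) : Diversity H where
  delta A := D.delta (A.image Subtype.val)
  nonneg A := D.nonneg _
  eq_zero_iff A := by
    rw [D.eq_zero_iff, Finset.card_image_of_injective A Subtype.val_injective]
  triangle A B C hB := by
    have h := D.triangle (A.image Subtype.val) (B.image Subtype.val) (C.image Subtype.val)
      (hB.image _)
    simpa [Finset.image_union] using h

end Diversity

namespace Diversity

variable {X : Type*} [DecidableEq X] (D : Diversity X)

lemma delta_empty' : D.delta ∅ = 0 := (D.eq_zero_iff ∅).mpr (by simp)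

lemma delta_singleton' (x : X) : D.delta {x} = 0 := (D.eq_zero_iff {x}).mpr (by simp)

lemma delta_le_insert' (A : Finset X) (b : X) : D.delta A ≤ D.delta (insert b A) := by
  have h := D.triangle A {b} ∅ ⟨b, Finset.mem_singleton_self b⟩
  simpa [D.delta_singleton', Finset.union_comm A {b}] using h

lemma delta_union_right' (A S : Finset X) : D.delta A ≤ D.delta (A ∪ S) := by
  induction S using Finset.induction_on with
  | empty => simp
  | insert b S' hx ih =>
      calc D.delta A ≤ D.delta (A ∪ S') := ih
        _ ≤ D.delta (insert b (A ∪ S')) := D.delta_le_insert' _ _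
        _ = D.delta (A ∪ insert b S') := by rw [Finset.union_insert]

lemma delta_mono' {A B : Finset X} (h : A ⊆ B) : D.delta A ≤ D.delta B := by
  have := D.delta_union_right' A B
  rwa [Finset.union_eq_right.mpr h] at this

lemma delta_star' (y : X) (P Q : Finset X) :
    D.delta (insert y (P ∪ Q)) ≤ D.delta (insert y P) + D.delta (insert y Q) := by
  have h := D.triangle (insert y P) {y} (insert y Q) ⟨y, Finset.mem_singleton_self y⟩
  have e1 : insert y P ∪ insert y Q = insert y (P ∪ Q) := by
    ext x; simp [or_assoc]
  have e2 : insert y P ∪ {y} = insert y P := by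
    ext x; simp
  have e3 : ({y} : Finset X) ∪ insert y Q = insert y Q := by
    ext x; simp
  rwa [e1, e2, e3] at h

lemma delta_star_sup' {ι : Type*} (y : X) (𝒞 : Finset ι) (f : ι → Finset X) :
    D.delta (insert y (𝒞.sup f)) ≤ ∑ C ∈ 𝒞, D.delta (insert y (f C)) := by
  classical
  induction 𝒞 using Finset.induction_on with
  | empty => simp [D.delta_singleton']
  | insert a S hx ih =>
      rw [Finset.sup_insert, Finset.sum_insert hx]
      exact le_trans (D.delta_star' y (f a) (S.sup f)) (by linarith)

end Diversity

section helpers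
variable {X : Type*} [DecidableEq X]

lemma sum_image_le' {ι κ : Type*} [DecidableEq κ] (s : Finset ι) (g : ι → κ) (f : κ → ℝ)
    (h : ∀ i ∈ s, 0 ≤ f (g i)) : ∑ u ∈ s.image g, f u ≤ ∑ i ∈ s, f (g i) := by
  classical
  induction s using Finset.induction_on with
  | empty => simp
  | insert a S hx ih =>
      rw [Finset.image_insert, Finset.sum_insert hx]
      by_cases hm : g a ∈ S.image g
      · rw [Finset.insert_eq_self.mpr hm]
        have := ih (fun i hi => h i (Finset.mem_insert_of_mem hi))
        have h0 := h a (Finset.mem_insert_self a S)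
        linarith
      · rw [Finset.sum_insert hm]
        have := ih (fun i hi => h i (Finset.mem_insert_of_mem hi))
        linarith

lemma image_sup' {ι β : Type*} [DecidableEq β] (𝒞 : Finset ι) (g : ι → Finset X) (f : X → β) :
    (𝒞.sup g).image f = 𝒞.sup (fun i => (g i).image f) := by
  classical
  induction 𝒞 using Finset.induction_on with
  | empty => simp
  | insert a S hx ih =>
      rw [Finset.sup_insert, Finset.sup_insert, Finset.sup_eq_union, Finset.sup_eq_union,
        Finset.image_union, ih]

lemma sum_insert_le' {ι : Type*} [DecidableEq ι] (a : ι) (s : Finset ι) (f : ι → ℝ)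
    (h : 0 ≤ f a) : ∑ u ∈ insert a s, f u ≤ f a + ∑ u ∈ s, f u := by
  by_cases hm : a ∈ s
  · rw [Finset.insert_eq_self.mpr hm]; linarith
  · rw [Finset.sum_insert hm]

end helpers

/-- Let `(X, δ)` be a hyperconvex diversity, `Z ⊆ X` nonempty and
bounded with respect to the induced metric, and let `r` on finite subsets of `Z`
satisfy `r ∅ = 0` and the hyperconvexity inequality for all finite collections of
finite subsets of `Z`. Then the set
`Y = { x ∈ X : δ(A ∪ {x}) ≤ r(A) for every finite A ⊆ Z }` is nonempty and the
restricted diversity `(Y, δ)` is hyperconvex. -/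
theorem hyperconvex_of_center_set
    {X : Type*} [DecidableEq X] (D : Diversity X)
    (hH : D.Hyperconvex)
    (Z : Set X) (hZne : Z.Nonempty)
    (hZbd : ∃ M : ℝ, ∀ y ∈ Z, ∀ z ∈ Z, D.delta {y, z} ≤ M)
    (r : Finset X → ℝ) (hr0 : r ∅ = 0)
    (hr : ∀ 𝒜 : Finset (Finset X), (∀ A ∈ 𝒜, (A : Set X) ⊆ Z) →
      D.delta (𝒜.sup id) ≤ ∑ A ∈ 𝒜, r A) :
    {x : X | ∀ A : Finset X, (A : Set X) ⊆ Z → D.delta (insert x A) ≤ r A}.Nonempty ∧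
    (D.restrict
      {x : X | ∀ A : Finset X, (A : Set X) ⊆ Z → D.delta (insert x A) ≤ r A}).Hyperconvex := by
  classical
  obtain ⟨z₀, hz₀⟩ := hZne
  set Yset := {x : X | ∀ A : Finset X, (A : Set X) ⊆ Z → D.delta (insert x A) ≤ r A} with hYset
  have hz₀sub : ((({z₀} : Finset X) : Set X)) ⊆ Z := by simp [hz₀]
  have hrpos : ∀ A : Finset X, (A : Set X) ⊆ Z → 0 ≤ r A := by
    intro A hA
    have h := hr {A} (by simpa using hA)
    simp only [Finset.sup_singleton, id, Finset.sum_singleton] at h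
    exact le_trans (D.nonneg A) h
  have hrz₀ : 0 ≤ r {z₀} := hrpos _ hz₀sub
  -- part 1 : Yset is nonempty
  set fZ : Finset X → Finset X := fun A => A.filter (· ∈ Z) with hfZ
  set fN : Finset X → Finset X := fun A => A.filter (· ∉ Z) with hfN
  have hfZsub : ∀ A : Finset X, ((fZ A : Set X)) ⊆ Z := by
    intro A x hx
    simp only [hfZ, Finset.coe_filter, Set.mem_setOf_eq] at hx
    exact hx.2
  set r' : Finset X → ℝ := fun A =>
    r (fZ A) + D.delta (insert z₀ (fN A)) + (if (fN A).Nonempty then r {z₀} else 0) with hr'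
  have hr'0 : r' ∅ = 0 := by
    simp [hr', hfZ, hfN, hr0, D.delta_singleton']
  have hr'fam : ∀ 𝒜 : Finset (Finset X), D.delta (𝒜.sup id) ≤ ∑ A ∈ 𝒜, r' A := by
    intro 𝒜
    have hsum : ∑ A ∈ 𝒜, r' A = (∑ A ∈ 𝒜, r (fZ A)) + (∑ A ∈ 𝒜, D.delta (insert z₀ (fN A)))
        + (∑ A ∈ 𝒜, if (fN A).Nonempty then r {z₀} else 0) := by
      rw [hr']; rw [← Finset.sum_add_distrib, ← Finset.sum_add_distrib]
    have himg : ∀ A ∈ 𝒜, ((fZ A : Set X)) ⊆ Z := fun A _ => hfZsub A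
    by_cases hU2 : (𝒜.sup fN).Nonempty
    · -- some junk exists
      obtain ⟨x, hx⟩ := hU2
      rw [Finset.mem_sup] at hx
      obtain ⟨A₀, hA₀mem, hxA₀⟩ := hx
      have hsplit : (𝒜.sup id) ⊆ insert z₀ (𝒜.sup fZ ∪ 𝒜.sup fN) := by
        intro y hy
        rw [Finset.mem_sup] at hy
        obtain ⟨A, hA, hyA⟩ := hy
        simp only [id] at hyA
        rw [Finset.mem_insert, Finset.mem_union, Finset.mem_sup, Finset.mem_sup]
        by_cases hyZ : y ∈ Z
        · exact Or.inr (Or.inl ⟨A, hA, by simp [hfZ, hyA, hyZ]⟩)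
        · exact Or.inr (Or.inr ⟨A, hA, by simp [hfN, hyA, hyZ]⟩)
      have h1 : D.delta (𝒜.sup id) ≤ D.delta (insert z₀ (𝒜.sup fZ))
          + D.delta (insert z₀ (𝒜.sup fN)) :=
        le_trans (D.delta_mono' hsplit) (D.delta_star' z₀ _ _)
      -- bound first term via hr
      have h2 : D.delta (insert z₀ (𝒜.sup fZ)) ≤ r {z₀} + ∑ A ∈ 𝒜, r (fZ A) := by
        have hA' : ∀ B ∈ insert ({z₀} : Finset X) (𝒜.image fZ), ((B : Set X)) ⊆ Z := by
          intro B hB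
          rcases Finset.mem_insert.mp hB with h | h
          · subst h; exact hz₀sub
          · obtain ⟨A, _, rfl⟩ := Finset.mem_image.mp h
            exact hfZsub A
        have hsup : (insert ({z₀} : Finset X) (𝒜.image fZ)).sup id
            = insert z₀ (𝒜.sup fZ) := by
          rw [Finset.sup_insert, Finset.sup_image]
          rw [Finset.insert_eq]; rfl
        have := hr _ hA'
        rw [hsup] at this
        refine le_trans this (le_trans (sum_insert_le' _ _ _ hrz₀) ?_)
        have := sum_image_le' 𝒜 fZ r (fun A hA => hrpos _ (hfZsub A))
        linarith
      have h3 : D.delta (insert z₀ (𝒜.sup fN)) ≤ ∑ A ∈ 𝒜, D.delta (insert z₀ (fN A)) :=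
        D.delta_star_sup' z₀ 𝒜 fN
      have h4 : r {z₀} ≤ ∑ A ∈ 𝒜, if (fN A).Nonempty then r {z₀} else 0 := by
        have h5 := Finset.single_le_sum (f := fun A => if (fN A).Nonempty then r {z₀} else 0)
          (fun A _ => by split_ifs <;> simp [hrz₀]) hA₀mem
        split_ifs at h5 with hcond
        · exact h5
        · exact absurd ⟨x, hxA₀⟩ hcond
      rw [hsum]; linarith
    · -- all A ⊆ Z
      have hAZ : ∀ A ∈ 𝒜, ((A : Set X)) ⊆ Z := by
        intro A hA x hx
        by_contra hxZ
        exact hU2 ⟨x, Finset.mem_sup.mpr ⟨A, hA, by simp [hfN, Finset.mem_coe.mp hx, hxZ]⟩⟩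
      have h := hr 𝒜 hAZ
      refine le_trans h (Finset.sum_le_sum ?_)
      intro A hA
      have hfZA : fZ A = A := Finset.filter_true_of_mem (fun x hx => hAZ A hA hx)
      have : (0:ℝ) ≤ D.delta (insert z₀ (fN A)) + (if (fN A).Nonempty then r {z₀} else 0) := by
        have h1 := D.nonneg (insert z₀ (fN A))
        split_ifs <;> linarith
      rw [hr']; dsimp only; rw [hfZA]; linarith
  obtain ⟨y₀, hy₀⟩ := hH r' hr'0 hr'fam
  have hy₀Y : y₀ ∈ Yset := by
    intro A hA
    have hfZA : fZ A = A := Finset.filter_true_of_mem (fun x hx => hA hx)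
    have hfNA : fN A = ∅ := by
      rw [hfN]; simp only [Finset.filter_eq_empty_iff]
      intro x hx; simp [hA hx]
    have := hy₀ A
    rw [hr'] at this; dsimp only at this
    rw [hfZA, hfNA] at this
    simpa [D.delta_singleton'] using this
  refine ⟨⟨y₀, hy₀Y⟩, ?_⟩
  intro s hs0 hs
  have hspos : ∀ B : Finset ↥Yset, 0 ≤ s B := by
    intro B
    have h := hs {B}
    simp only [Finset.sup_singleton, id, Finset.sum_singleton] at h
    exact le_trans ((D.restrict Yset).nonneg B) h
  have hdiam : ∀ y ∈ Yset, ∀ y' ∈ Yset, D.delta ({y, y'} : Finset X) ≤ 2 * r {z₀} := by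
    intro y hy y' hy'
    have h := D.triangle {y} {z₀} {y'} ⟨z₀, Finset.mem_singleton_self z₀⟩
    rw [← Finset.insert_eq, ← Finset.insert_eq, ← Finset.insert_eq] at h
    have h1 : D.delta (insert y {z₀}) ≤ r {z₀} := hy {z₀} hz₀sub
    have h2 : D.delta (insert z₀ {y'}) ≤ r {z₀} := by
      have := hy' {z₀} hz₀sub
      have e : (insert z₀ {y'} : Finset X) = insert y' {z₀} := by ext a; simp; tauto
      rwa [e]
    linarith
  set lift : Finset X → Finset ↥Yset := fun C => C.subtype (· ∈ Yset) with hlift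
  have hlift_img : ∀ C : Finset X, (C : Set X) ⊆ Yset → (lift C).image Subtype.val = C := by
    intro C hC
    ext a
    simp only [hlift, Finset.mem_image, Finset.mem_subtype]
    constructor
    · rintro ⟨b, hb, rfl⟩; exact hb
    · intro ha; exact ⟨⟨a, hC (Finset.mem_coe.mpr ha)⟩, ha, rfl⟩
  have hlift_back : ∀ B : Finset ↥Yset, lift (B.image Subtype.val) = B := by
    intro B; ext a
    simp only [hlift, Finset.mem_subtype, Finset.mem_image]
    constructor
    · rintro ⟨b, hb, hba⟩; rwa [show b = a from Subtype.ext hba] at hb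
    · intro ha; exact ⟨a, ha, rfl⟩
  set t : Finset X → ℝ := fun C =>
    if (C : Set X) ⊆ Z ∧ (C : Set X) ⊆ Yset then min (r C) (s (lift C))
    else if (C : Set X) ⊆ Z then r C
    else if (C : Set X) ⊆ Yset then s (lift C)
    else D.delta (insert y₀ C) + 2 * r {z₀} with ht
  have hlift_empty : lift ∅ = ∅ := by
    ext a; simp [hlift, Finset.mem_subtype]
  have ht0 : t ∅ = 0 := by
    rw [ht]; dsimp only
    rw [if_pos ⟨by simp, by simp⟩, hlift_empty, hr0, hs0]; simp
  have ht_le_r : ∀ C : Finset X, (C : Set X) ⊆ Z → t C ≤ r C := by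
    intro C hC
    rw [ht]; dsimp only
    by_cases h1 : (C : Set X) ⊆ Z ∧ (C : Set X) ⊆ Yset
    · rw [if_pos h1]; exact min_le_left _ _
    · rw [if_neg h1, if_pos hC]
  have ht_le_s : ∀ C : Finset X, (C : Set X) ⊆ Yset → t C ≤ s (lift C) := by
    intro C hC
    rw [ht]; dsimp only
    by_cases h1 : (C : Set X) ⊆ Z ∧ (C : Set X) ⊆ Yset
    · rw [if_pos h1]; exact min_le_right _ _
    · have h2 : ¬ (C : Set X) ⊆ Z := fun hh => h1 ⟨hh, hC⟩
      rw [if_neg h1, if_neg h2, if_pos hC]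
  have ht_R : ∀ C : Finset X, (C : Set X) ⊆ Z →
      (¬ (C : Set X) ⊆ Yset ∨ r C ≤ s (lift C)) → r C ≤ t C := by
    intro C hC hor
    rw [ht]; dsimp only
    by_cases h1 : (C : Set X) ⊆ Z ∧ (C : Set X) ⊆ Yset
    · rw [if_pos h1]
      rcases hor with h | h
      · exact absurd h1.2 h
      · exact le_min le_rfl h
    · rw [if_neg h1, if_pos hC]
  have ht_S : ∀ C : Finset X,
      ¬ ((C : Set X) ⊆ Z ∧ (¬ (C : Set X) ⊆ Yset ∨ r C ≤ s (lift C))) →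
      (C : Set X) ⊆ Yset → s (lift C) ≤ t C := by
    intro C hn hC
    rw [ht]; dsimp only
    by_cases h1 : (C : Set X) ⊆ Z ∧ (C : Set X) ⊆ Yset
    · rw [if_pos h1]
      have h4 : ¬ (¬ (C : Set X) ⊆ Yset ∨ r C ≤ s (lift C)) := fun hh => hn ⟨h1.1, hh⟩
      push_neg at h4
      exact le_min h4.2.le le_rfl
    · have h2 : ¬ (C : Set X) ⊆ Z := fun hh => h1 ⟨hh, hC⟩
      rw [if_neg h1, if_neg h2, if_pos hC]
  have ht_J : ∀ C : Finset X, ¬ (C : Set X) ⊆ Z → ¬ (C : Set X) ⊆ Yset →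
      t C = D.delta (insert y₀ C) + 2 * r {z₀} := by
    intro C h1 h2
    rw [ht]; dsimp only
    rw [if_neg (fun hh => h1 hh.1), if_neg h1, if_neg h2]
  have htfam : ∀ 𝒞 : Finset (Finset X), D.delta (𝒞.sup id) ≤ ∑ C ∈ 𝒞, t C := by
    intro 𝒞
    set PR : Finset X → Prop := fun C =>
      (C : Set X) ⊆ Z ∧ (¬ (C : Set X) ⊆ Yset ∨ r C ≤ s (lift C)) with hPR
    set CR := 𝒞.filter PR with hCR
    set CS := (𝒞.filter fun C => ¬PR C ∧ (C : Set X) ⊆ Yset) with hCS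
    set CJ := (𝒞.filter fun C => ¬PR C ∧ ¬ (C : Set X) ⊆ Yset) with hCJ
    have hsum : ∑ C ∈ CR, r C + (∑ C ∈ CS, s (lift C)
        + ∑ C ∈ CJ, (D.delta (insert y₀ C) + 2 * r {z₀})) ≤ ∑ C ∈ 𝒞, t C := by
      have e1 : ∑ C ∈ 𝒞, t C = ∑ C ∈ CR, t C + ∑ C ∈ 𝒞.filter (fun C => ¬ PR C), t C :=
        (Finset.sum_filter_add_sum_filter_not 𝒞 PR t).symm
      have eCS : (𝒞.filter (fun C => ¬ PR C)).filter (fun C : Finset X => (C : Set X) ⊆ Yset) = CS := by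
        ext C
        simp only [hCS, Finset.mem_filter, and_assoc]
      have eCJ : (𝒞.filter (fun C => ¬ PR C)).filter (fun C : Finset X => ¬ (C : Set X) ⊆ Yset) = CJ := by
        ext C
        simp only [hCJ, Finset.mem_filter, and_assoc]
      have e2 : ∑ C ∈ 𝒞.filter (fun C => ¬ PR C), t C
          = ∑ C ∈ CS, t C + ∑ C ∈ CJ, t C := by
        rw [← eCS, ← eCJ]
        exact (Finset.sum_filter_add_sum_filter_not _ _ t).symm
      have b1 : ∑ C ∈ CR, r C ≤ ∑ C ∈ CR, t C := by
        refine Finset.sum_le_sum ?_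
        intro C hC
        have h := (Finset.mem_filter.mp hC).2
        exact ht_R C h.1 h.2
      have b2 : ∑ C ∈ CS, s (lift C) ≤ ∑ C ∈ CS, t C := by
        refine Finset.sum_le_sum ?_
        intro C hC
        have h := (Finset.mem_filter.mp hC).2
        exact ht_S C h.1 h.2
      have b3 : ∑ C ∈ CJ, (D.delta (insert y₀ C) + 2 * r {z₀}) ≤ ∑ C ∈ CJ, t C := by
        refine Finset.sum_le_sum ?_
        intro C hC
        have h := (Finset.mem_filter.mp hC).2
        have hnZ : ¬ (C : Set X) ⊆ Z := fun hh => h.1 ⟨hh, Or.inl h.2⟩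
        rw [ht_J C hnZ h.2]
      rw [e1, e2]
      linarith
    obtain ⟨ystar, hystarY, hystarUS⟩ :
        ∃ y, y ∈ Yset ∧ ((CS.sup id).Nonempty → y ∈ CS.sup id) := by
      by_cases h : (CS.sup id).Nonempty
      · obtain ⟨y, hy⟩ := h
        have hy' := hy
        rw [Finset.mem_sup] at hy'
        obtain ⟨C, hC, hyC⟩ := hy'
        simp only [id] at hyC
        have hCY : (C : Set X) ⊆ Yset := (Finset.mem_filter.mp hC).2.2
        exact ⟨y, hCY (Finset.mem_coe.mpr hyC), fun _ => hy⟩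
      · exact ⟨y₀, hy₀Y, fun hh => absurd hh h⟩
    have hsub : 𝒞.sup id ⊆ insert ystar (CR.sup id ∪ (CS.sup id ∪ CJ.sup id)) := by
      intro x hx
      rw [Finset.mem_sup] at hx
      obtain ⟨C, hC, hxC⟩ := hx
      simp only [id] at hxC
      rw [Finset.mem_insert, Finset.mem_union, Finset.mem_union,
        Finset.mem_sup, Finset.mem_sup, Finset.mem_sup]
      by_cases h1 : PR C
      · exact Or.inr (Or.inl ⟨C, Finset.mem_filter.mpr ⟨hC, h1⟩, hxC⟩)
      · by_cases h2 : (C : Set X) ⊆ Yset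
        · exact Or.inr (Or.inr (Or.inl ⟨C, Finset.mem_filter.mpr ⟨hC, h1, h2⟩, hxC⟩))
        · exact Or.inr (Or.inr (Or.inr ⟨C, Finset.mem_filter.mpr ⟨hC, h1, h2⟩, hxC⟩))
    have hmain : D.delta (𝒞.sup id) ≤ D.delta (insert ystar (CR.sup id))
        + (D.delta (insert ystar (CS.sup id)) + D.delta (insert ystar (CJ.sup id))) := by
      refine le_trans (D.delta_mono' hsub) ?_
      refine le_trans (D.delta_star' ystar _ _) ?_
      have := D.delta_star' ystar (CS.sup id) (CJ.sup id)
      linarith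
    have hi : D.delta (insert ystar (CR.sup id)) ≤ ∑ C ∈ CR, r C := by
      refine le_trans (D.delta_star_sup' ystar CR id) (Finset.sum_le_sum ?_)
      intro C hC
      have hPRC := (Finset.mem_filter.mp hC).2
      exact hystarY C hPRC.1
    have hii : D.delta (insert ystar (CS.sup id)) ≤ ∑ C ∈ CS, s (lift C) := by
      by_cases h : (CS.sup id).Nonempty
      · rw [Finset.insert_eq_self.mpr (hystarUS h)]
        have himg2 : ((CS.image lift).sup id).image Subtype.val = CS.sup id := by
          rw [Finset.sup_image]
          rw [show (id ∘ lift) = lift from rfl]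
          rw [image_sup' CS lift Subtype.val]
          refine Finset.sup_congr rfl ?_
          intro C hC
          exact hlift_img C (Finset.mem_filter.mp hC).2.2
        have h' := hs (CS.image lift)
        have hdelta : (D.restrict Yset).delta ((CS.image lift).sup id) = D.delta (CS.sup id) := by
          rw [show (D.restrict Yset).delta ((CS.image lift).sup id)
              = D.delta (((CS.image lift).sup id).image Subtype.val) from rfl, himg2]
        rw [hdelta] at h'
        refine le_trans h' (le_of_eq ?_)
        refine Finset.sum_image ?_
        intro C1 h1 C2 h2 he
        have h3 := congrArg (Finset.image Subtype.val) he
        rwa [hlift_img C1 (Finset.mem_filter.mp h1).2.2,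
          hlift_img C2 (Finset.mem_filter.mp h2).2.2] at h3
      · rw [Finset.not_nonempty_iff_eq_empty] at h
        rw [h]
        have h0 : D.delta (insert ystar (∅ : Finset X)) = 0 := by
          rw [show (insert ystar (∅ : Finset X)) = {ystar} from rfl]
          exact D.delta_singleton' ystar
        rw [h0]
        exact Finset.sum_nonneg (fun C _ => hspos _)
    have hiii : D.delta (insert ystar (CJ.sup id))
        ≤ ∑ C ∈ CJ, (D.delta (insert y₀ C) + 2 * r {z₀}) := by
      refine le_trans (D.delta_star_sup' ystar CJ id) (Finset.sum_le_sum ?_)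
      intro C hC
      have h := D.triangle {ystar} {y₀} C ⟨y₀, Finset.mem_singleton_self y₀⟩
      rw [← Finset.insert_eq, ← Finset.insert_eq, ← Finset.insert_eq] at h
      have hd := hdiam ystar hystarY y₀ hy₀Y
      simp only [id]
      linarith
    calc D.delta (𝒞.sup id)
        ≤ D.delta (insert ystar (CR.sup id)) + (D.delta (insert ystar (CS.sup id))
          + D.delta (insert ystar (CJ.sup id))) := hmain
      _ ≤ ∑ C ∈ CR, r C + (∑ C ∈ CS, s (lift C)
          + ∑ C ∈ CJ, (D.delta (insert y₀ C) + 2 * r {z₀})) := by linarith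
      _ ≤ ∑ C ∈ 𝒞, t C := hsum
  obtain ⟨z, hz⟩ := hH t ht0 htfam
  have hzY : z ∈ Yset := fun A hA => le_trans (hz A) (ht_le_r A hA)
  refine ⟨⟨z, hzY⟩, ?_⟩
  intro B'
  have e : ((insert (⟨z, hzY⟩ : ↥Yset) B').image Subtype.val)
      = insert z (B'.image Subtype.val) := Finset.image_insert _ _ _
  calc (D.restrict Yset).delta (insert ⟨z, hzY⟩ B')
      = D.delta (insert z (B'.image Subtype.val)) := by
        rw [show (D.restrict Yset).delta (insert (⟨z, hzY⟩ : ↥Yset) B')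
            = D.delta (((insert (⟨z, hzY⟩ : ↥Yset) B')).image Subtype.val) from rfl, e]
    _ ≤ s B' := by
        have h2 := le_trans (hz (B'.image Subtype.val)) (ht_le_s _ ?_)
        · rwa [hlift_back B'] at h2
        · intro a ha
          simp only [Finset.coe_image, Set.mem_image, Finset.mem_coe] at ha
          obtain ⟨b, _, rfl⟩ := ha
          exact b.2
end
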